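/- Let M ≥ 1 and j ≥ 1 be integers, let n ≥ 0, and let a_k^{(n)} (k, n ≥ 0) be complex numbers. Then τ_{j(M+1)}^{(n)} = Π_{ℓ=0}^{M} G_{ℓ,j}^{(n)}. -/

import Mathlib

/-- `G_{i,0}^{(n)} = 1` and, for `j ≥ 1`,
`G_{i,j}^{(n)} = det (a_{i+Ms+ℓ}^{(n)})_{s,ℓ = 0,…,j-1}`. -/
noncomputable def Gdet (M : ℕ) (a : ℕ → ℕ → ℂ) (i j n : ℕ) : ℂ :=
  Matrix.det (Matrix.of fun s ℓ : Fin j => a (i + M * (s : ℕ) + (ℓ : ℕ)) n)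

/-- The tau-function `τ_k^{(n)}` for `k = i + j(M+1)` with `j = k / (M+1)` and
`i = k % (M+1)`: the determinant of the `(j(M+1)+i) × (j(M+1)+i)` block matrix
described in the paper (rows/columns indexed by `(Fin j × Fin (M+1)) ⊕ Fin i`,
where the pair `(p, s)` stands for the row `p(M+1)+s` and `inr s` for the row
`j(M+1)+s`, and similarly for columns). `τ_0^{(n)} = 1`. -/
noncomputable def tau (M : ℕ) (a : ℕ → ℕ → ℂ) (k n : ℕ) : ℂ :=
  Matrix.det (Matrix.of
    fun rr cc : (Fin (k / (M + 1)) × Fin (M + 1)) ⊕ Fin (k % (M + 1)) =>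
      match rr, cc with
      | Sum.inl (p, s), Sum.inl (q, t) =>
          if (s : ℕ) = (t : ℕ) then a ((p : ℕ) * M + (q : ℕ) + (s : ℕ)) n else 0
      | Sum.inl (p, s), Sum.inr t =>
          if (s : ℕ) = (t : ℕ) then a ((p : ℕ) * M + k / (M + 1) + (s : ℕ)) n else 0
      | Sum.inr s, Sum.inl (q, t) =>
          if (s : ℕ) = (t : ℕ) then a ((k / (M + 1)) * M + (q : ℕ) + (s : ℕ)) n else 0
      | Sum.inr s, Sum.inr t =>
          if (s : ℕ) = (t : ℕ) then a ((k / (M + 1)) * (M + 1) + (s : ℕ)) n else 0)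

/- STATEMENT 5: τ_{j(M+1)}^{(n)} = Π_{ℓ=0}^{M} G_{ℓ,j}^{(n)}. -/
theorem tau_block_diagonal
    (M j n : ℕ) (hM : 1 ≤ M) (hj : 1 ≤ j) (a : ℕ → ℕ → ℂ) :
    tau M a (j * (M + 1)) n = ∏ ℓ ∈ Finset.range (M + 1), Gdet M a ℓ j n := by
  have hdiv : j * (M + 1) / (M + 1) = j := Nat.mul_div_cancel j (Nat.succ_pos M)
  have hmod : j * (M + 1) % (M + 1) = 0 := Nat.mul_mod_left j (M + 1)
  set d : Fin (M + 1) → Matrix (Fin j) (Fin j) ℂ := fun s =>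
    Matrix.of fun p q : Fin j => a ((p : ℕ) * M + (q : ℕ) + (s : ℕ)) n with hd
  let e : ((Fin (j * (M + 1) / (M + 1)) × Fin (M + 1)) ⊕ Fin (j * (M + 1) % (M + 1)))
      ≃ Fin j × Fin (M + 1) :=
    (Equiv.sumCongr (Equiv.prodCongr (finCongr hdiv) (Equiv.refl (Fin (M + 1))))
      (finCongr hmod)).trans (Equiv.sumEmpty (Fin j × Fin (M + 1)) (Fin 0))
  have h1 : tau M a (j * (M + 1)) n = ((Matrix.blockDiagonal d).submatrix e e).det := by
    unfold tau
    congr 1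
    ext rr cc
    cases rr with
    | inl ps =>
      obtain ⟨p, s⟩ := ps
      cases cc with
      | inl qt =>
        obtain ⟨q, t⟩ := qt
        simp [e, Matrix.blockDiagonal_apply, Fin.val_eq_val, hd, Equiv.sumEmpty]
      | inr t =>
        exact absurd (lt_of_lt_of_eq t.2 hmod) (Nat.not_lt_zero _)
    | inr s =>
      exact absurd (lt_of_lt_of_eq s.2 hmod) (Nat.not_lt_zero _)
  rw [h1, Matrix.det_submatrix_equiv_self, Matrix.det_blockDiagonal]
  rw [← Fin.prod_univ_eq_prod_range (fun ℓ => Gdet M a ℓ j n) (M + 1)]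
  refine Finset.prod_congr rfl fun s _ => ?_
  unfold Gdet
  congr 1
  ext p q
  simp only [hd, Matrix.of_apply]
  congr 1
  ring
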